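/- Let $V$ be a real Hilbert space, $K \subseteq V$ a nonempty closed convex set, $a : V \times V \to \mathbb{R}$ a continuous symmetric bilinear form that is coercive with constant $m > 0$ (i.e. $m\|v\|^2 \le a(v,v)$ for all $v \in V$), and $g \in V'$. Then there exists a unique $u \in K$ such that $a(u, v - u) \ge \langle g, v - u \rangle$ for all $v \in K$. -/

import Mathlib

open scoped RealInnerProductSpace

/-- Type synonym carrying the inner product induced by the bilinear form. -/
def LSSyn (V : Type*) : Type _ := V

/-- The identity map from the synonym to the original space. -/
def LSSyn.toV {V : Type*} (x : LSSyn V) : V := x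

/-- The identity map from the original space to the synonym. -/
def LSSyn.ofV {V : Type*} (x : V) : LSSyn V := x

theorem LS_exists {V : Type*} [NormedAddCommGroup V] [InnerProductSpace ℝ V] [CompleteSpace V]
    (K : Set V) (hKne : K.Nonempty) (hKcl : IsClosed K) (hKco : Convex ℝ K)
    (a : V →L[ℝ] V →L[ℝ] ℝ) (hsym : ∀ u v : V, a u v = a v u)
    (m : ℝ) (hm : 0 < m) (hcoer : ∀ v : V, m * ‖v‖ ^ 2 ≤ a v v)
    (g : V →L[ℝ] ℝ) :
    ∃ u ∈ K, ∀ v ∈ K, g (v - u) ≤ a u (v - u) := by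
  letI : AddCommGroup (LSSyn V) := inferInstanceAs (AddCommGroup V)
  letI : Module ℝ (LSSyn V) := inferInstanceAs (Module ℝ V)
  letI core : InnerProductSpace.Core ℝ (LSSyn V) :=
    { inner := fun u v => a u.toV v.toV
      conj_inner_symm := fun x y => by simpa using hsym y.toV x.toV
      re_inner_nonneg := fun x => by
        have h1 : (0:ℝ) ≤ m * ‖x.toV‖ ^ 2 := by positivity
        simpa using h1.trans (hcoer x.toV)
      add_left := fun x y z => by
        show a (x.toV + y.toV) z.toV = _
        simp
      smul_left := fun x y r => by
        show a (r • x.toV) y.toV = _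
        simp [hsym]
      definite := fun x hx => by
        have h1 : m * ‖x.toV‖ ^ 2 ≤ 0 := by
          have := hcoer x.toV
          simpa [show a x.toV x.toV = 0 from hx] using this
        have h2 : ‖x.toV‖ = 0 := by
          have hsq : ‖x.toV‖ ^ 2 = 0 := by nlinarith [sq_nonneg ‖x.toV‖]
          simpa using pow_eq_zero_iff (n := 2) (by norm_num) |>.mp hsq
        exact norm_eq_zero.mp h2 }
  letI : NormedAddCommGroup (LSSyn V) := core.toNormedAddCommGroup
  letI : InnerProductSpace ℝ (LSSyn V) := InnerProductSpace.ofCore core.toCore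
  have hinner : ∀ x y : LSSyn V, ⟪x, y⟫ = a x.toV y.toV := fun _ _ => rfl
  have hnormsq : ∀ x : LSSyn V, ‖x‖ ^ 2 = a x.toV x.toV := fun x => by
    rw [← real_inner_self_eq_norm_sq]; rfl
  have hub : ∀ x : LSSyn V, ‖x‖ ≤ Real.sqrt ‖a‖ * ‖x.toV‖ := by
    intro x
    have h1 : a x.toV x.toV ≤ ‖a‖ * ‖x.toV‖ * ‖x.toV‖ := by
      calc a x.toV x.toV ≤ |a x.toV x.toV| := le_abs_self _
        _ ≤ ‖a x.toV‖ * ‖x.toV‖ := (a x.toV).le_opNorm x.toV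
        _ ≤ ‖a‖ * ‖x.toV‖ * ‖x.toV‖ := by gcongr; exact a.le_opNorm x.toV
    have h2 : ‖x‖ ^ 2 ≤ (Real.sqrt ‖a‖ * ‖x.toV‖) ^ 2 := by
      rw [hnormsq, mul_pow, Real.sq_sqrt (norm_nonneg a)]; nlinarith
    nlinarith [norm_nonneg x, Real.sqrt_nonneg ‖a‖, norm_nonneg x.toV,
      mul_nonneg (Real.sqrt_nonneg ‖a‖) (norm_nonneg x.toV)]
  have hlb : ∀ x : LSSyn V, Real.sqrt m * ‖x.toV‖ ≤ ‖x‖ := by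
    intro x
    have h2 : (Real.sqrt m * ‖x.toV‖) ^ 2 ≤ ‖x‖ ^ 2 := by
      rw [hnormsq, mul_pow, Real.sq_sqrt hm.le]; exact hcoer x.toV
    nlinarith [norm_nonneg x, Real.sqrt_nonneg m, norm_nonneg x.toV,
      mul_nonneg (Real.sqrt_nonneg m) (norm_nonneg x.toV)]
  have hmpos : 0 < Real.sqrt m := Real.sqrt_pos.mpr hm
  have lip1 : LipschitzWith ⟨Real.sqrt ‖a‖, Real.sqrt_nonneg _⟩ (LSSyn.ofV (V := V)) := by
    apply LipschitzWith.of_dist_le_mul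
    intro x y
    have h := hub (LSSyn.ofV x - LSSyn.ofV y)
    rw [dist_eq_norm, dist_eq_norm]
    exact h
  have lip2 : LipschitzWith ⟨(Real.sqrt m)⁻¹, by positivity⟩ (LSSyn.toV (V := V)) := by
    apply LipschitzWith.of_dist_le_mul
    intro x y
    have h := hlb (x - y)
    rw [dist_eq_norm, dist_eq_norm]
    show ‖x.toV - y.toV‖ ≤ (Real.sqrt m)⁻¹ * ‖x - y‖
    rw [le_inv_mul_iff₀ hmpos]
    exact h
  let e : V ≃ᵤ LSSyn V :=
    { toFun := LSSyn.ofV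
      invFun := LSSyn.toV
      left_inv := fun _ => rfl
      right_inv := fun _ => rfl
      uniformContinuous_toFun := lip1.uniformContinuous
      uniformContinuous_invFun := lip2.uniformContinuous }
  haveI : CompleteSpace (LSSyn V) := e.completeSpace_iff.mp inferInstance
  set K' : Set (LSSyn V) := LSSyn.toV ⁻¹' K with hK'
  have hK'cl : IsClosed K' := hKcl.preimage lip2.continuous
  have hK'ne : K'.Nonempty := ⟨LSSyn.ofV hKne.choose, hKne.choose_spec⟩
  have hK'co : Convex ℝ K' := fun x hx y hy s t hs ht hst => hKco hx hy hs ht hst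
  let g' : LSSyn V →L[ℝ] ℝ :=
    { toFun := fun x => g x.toV
      map_add' := fun x y => by exact g.map_add x.toV y.toV
      map_smul' := fun r x => by exact g.map_smul r x.toV
      cont := g.continuous.comp lip2.continuous }
  let w : LSSyn V := (InnerProductSpace.toDual ℝ (LSSyn V)).symm g'
  obtain ⟨u, huK, hmin⟩ :=
    exists_norm_eq_iInf_of_complete_convex hK'ne hK'cl.isComplete hK'co w
  have hchar := (norm_eq_iInf_iff_real_inner_le_zero hK'co huK).mp hmin
  refine ⟨u.toV, huK, fun v hv => ?_⟩
  have h := hchar (LSSyn.ofV v) hv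
  rw [inner_sub_left] at h
  have hw : ⟪w, LSSyn.ofV v - u⟫ = g' (LSSyn.ofV v - u) :=
    InnerProductSpace.toDual_symm_apply
  have h1 : g' (LSSyn.ofV v - u) = g (v - u.toV) := rfl
  have h2 : ⟪u, LSSyn.ofV v - u⟫ = a u.toV (v - u.toV) := rfl
  rw [hw, h1, h2] at h
  linarith

/-- Lions–Stampacchia theorem: existence and uniqueness of the solution of an
elliptic variational inequality on a nonempty closed convex set. -/
theorem stmt_0 {V : Type*} [NormedAddCommGroup V] [InnerProductSpace ℝ V] [CompleteSpace V]
    (K : Set V) (hKne : K.Nonempty) (hKcl : IsClosed K) (hKco : Convex ℝ K)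
    (a : V →L[ℝ] V →L[ℝ] ℝ) (hsym : ∀ u v : V, a u v = a v u)
    (m : ℝ) (hm : 0 < m) (hcoer : ∀ v : V, m * ‖v‖ ^ 2 ≤ a v v)
    (g : V →L[ℝ] ℝ) :
    ∃! u : V, u ∈ K ∧ ∀ v ∈ K, g (v - u) ≤ a u (v - u) := by
  obtain ⟨u, huK, hu⟩ := LS_exists K hKne hKcl hKco a hsym m hm hcoer g
  refine ⟨u, ⟨huK, hu⟩, ?_⟩
  rintro u' ⟨hu'K, hu'⟩
  have h1 := hu u' hu'K
  have h2 := hu' u huK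
  -- m ‖u' - u‖² ≤ a (u'-u) (u'-u) ≤ 0
  have h3 : a (u' - u) (u' - u) ≤ 0 := by
    have e1 : a u (u' - u) + a u' (u - u') = -(a (u' - u) (u' - u)) := by
      have := hsym u u'
      have := hsym u' u
      simp only [map_sub, ContinuousLinearMap.sub_apply]
      nlinarith [hsym u u']
    have e2 : g (u - u') = -g (u' - u) := by
      rw [show u - u' = -(u' - u) by abel, map_neg]
    linarith
  have h4 : m * ‖u' - u‖ ^ 2 ≤ 0 := (hcoer (u' - u)).trans h3
  have h5 : ‖u' - u‖ = 0 := by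
    have hsq : ‖u' - u‖ ^ 2 = 0 := by nlinarith [sq_nonneg ‖u' - u‖]
    simpa using pow_eq_zero_iff (n := 2) (by norm_num) |>.mp hsq
  have : u' - u = 0 := norm_eq_zero.mp h5
  have : u' = u := by
    
    rwa [sub_eq_zero] at this
  exact this
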